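/- Let p ∈ Q_α be a projection and p' = (pₖ) ∈ B a lift of p with each pₖ a projection in M_{n_k}. Then the rank of pₖ is eventually constant, i.e., there exist r and K such that rank(pₖ) = r for all k ≥ K. -/

import Mathlib

open scoped Matrix.Norms.L2Operator
open Filter Matrix

/-- The standard upper-left corner embedding `M_{n k} → M_{n (k+1)}`, `a ↦ a ⊕ 0`. -/
def cornerEmb (n : ℕ → ℕ) (k : ℕ) (a : Matrix (Fin (n k)) (Fin (n k)) ℂ) :
    Matrix (Fin (n (k + 1))) (Fin (n (k + 1))) ℂ :=
  fun i j =>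
    if hi : (i : ℕ) < n k then
      if hj : (j : ℕ) < n k then a ⟨i, hi⟩ ⟨j, hj⟩ else 0
    else 0

/-- The rectangular "isometry" `E : ℂ^m → ℂ^N`. -/
def inclMat (m N : ℕ) : Matrix (Fin N) (Fin m) ℂ :=
  fun i j => if (i : ℕ) = (j : ℕ) then 1 else 0

lemma inclMat_mul_apply {m N o : ℕ} (B : Matrix (Fin m) (Fin o) ℂ) (i : Fin N) (j : Fin o) :
    (inclMat m N * B) i j = if hi : (i : ℕ) < m then B ⟨i, hi⟩ j else 0 := by
  rw [Matrix.mul_apply]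
  split_ifs with hi
  · rw [Finset.sum_eq_single (⟨(i : ℕ), hi⟩ : Fin m)]
    · simp [inclMat]
    · intro s _ hs
      have : (i : ℕ) ≠ (s : ℕ) := by
        intro h; exact hs (Fin.ext h.symm)
      simp [inclMat, this]
    · simp
  · apply Finset.sum_eq_zero
    intro s _
    have : (i : ℕ) ≠ (s : ℕ) := by
      intro h; exact hi (h ▸ s.isLt)
    simp [inclMat, this]

lemma mul_inclMat_transpose_apply {m N o : ℕ} (B : Matrix (Fin o) (Fin m) ℂ) (i : Fin o)
    (j : Fin N) :
    (B * (inclMat m N)ᵀ) i j = if hj : (j : ℕ) < m then B i ⟨j, hj⟩ else 0 := by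
  rw [Matrix.mul_apply]
  split_ifs with hj
  · rw [Finset.sum_eq_single (⟨(j : ℕ), hj⟩ : Fin m)]
    · simp [inclMat, Matrix.transpose_apply]
    · intro s _ hs
      have : (j : ℕ) ≠ (s : ℕ) := by
        intro h; exact hs (Fin.ext h.symm)
      simp [inclMat, Matrix.transpose_apply, this]
    · simp
  · apply Finset.sum_eq_zero
    intro s _
    have : (j : ℕ) ≠ (s : ℕ) := by
      intro h; exact hj (h ▸ s.isLt)
    simp [inclMat, Matrix.transpose_apply, this]

lemma inclMat_transpose_mul {m N : ℕ} (h : m ≤ N) :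
    (inclMat m N)ᵀ * inclMat m N = (1 : Matrix (Fin m) (Fin m) ℂ) := by
  ext i j
  rw [Matrix.mul_apply]
  rw [Finset.sum_eq_single (Fin.castLE h i)]
  · by_cases hij : i = j
    · subst hij
      simp [inclMat, Matrix.transpose_apply, Fin.castLE]
    · have hne : (i : ℕ) ≠ (j : ℕ) := fun hh => hij (Fin.ext hh)
      simp [inclMat, Matrix.transpose_apply, Matrix.one_apply, hij, hne, Fin.castLE]
  · intro s _ hs
    have : ((s : Fin N) : ℕ) ≠ (i : ℕ) := by
      intro hh
      exact hs (Fin.ext hh)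
    simp [inclMat, Matrix.transpose_apply, this]
  · simp

lemma cornerEmb_eq (n : ℕ → ℕ) (k : ℕ) (h : n k ≤ n (k + 1))
    (a : Matrix (Fin (n k)) (Fin (n k)) ℂ) :
    cornerEmb n k a = inclMat (n k) (n (k + 1)) * a * (inclMat (n k) (n (k + 1)))ᵀ := by
  ext i j
  rw [mul_inclMat_transpose_apply, cornerEmb]
  by_cases hi : (i : ℕ) < n k <;> by_cases hj : (j : ℕ) < n k <;>
    simp [hi, hj, inclMat_mul_apply]

lemma cornerEmb_mul (n : ℕ → ℕ) (k : ℕ) (h : n k ≤ n (k + 1))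
    (a b : Matrix (Fin (n k)) (Fin (n k)) ℂ) :
    cornerEmb n k (a * b) = cornerEmb n k a * cornerEmb n k b := by
  rw [cornerEmb_eq n k h, cornerEmb_eq n k h, cornerEmb_eq n k h]
  set E := inclMat (n k) (n (k + 1)) with hE
  have h1 : E * a * Eᵀ * (E * b * Eᵀ) = E * a * (Eᵀ * E * (b * Eᵀ)) := by
    simp only [Matrix.mul_assoc]
  rw [h1, inclMat_transpose_mul h, Matrix.one_mul]
  simp only [Matrix.mul_assoc]

lemma cornerEmb_rank (n : ℕ → ℕ) (k : ℕ) (h : n k ≤ n (k + 1))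
    (a : Matrix (Fin (n k)) (Fin (n k)) ℂ) :
    (cornerEmb n k a).rank = a.rank := by
  apply le_antisymm
  · rw [cornerEmb_eq n k h]
    calc (inclMat (n k) (n (k+1)) * a * (inclMat (n k) (n (k+1)))ᵀ).rank
        ≤ (inclMat (n k) (n (k+1)) * a).rank := Matrix.rank_mul_le_left _ _
      _ ≤ a.rank := Matrix.rank_mul_le_right _ _
  · have key : a = (inclMat (n k) (n (k+1)))ᵀ * cornerEmb n k a * inclMat (n k) (n (k+1)) := by
      rw [cornerEmb_eq n k h]
      set E := inclMat (n k) (n (k + 1)) with hE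
      have h1 : Eᵀ * (E * a * Eᵀ) * E = Eᵀ * E * (a * (Eᵀ * E)) := by
        simp only [Matrix.mul_assoc]
      rw [h1, inclMat_transpose_mul h, Matrix.one_mul, Matrix.mul_one]
    conv_lhs => rw [key]
    calc ((inclMat (n k) (n (k+1)))ᵀ * cornerEmb n k a * inclMat (n k) (n (k+1))).rank
        ≤ ((inclMat (n k) (n (k+1)))ᵀ * cornerEmb n k a).rank := Matrix.rank_mul_le_left _ _
      _ ≤ (cornerEmb n k a).rank := Matrix.rank_mul_le_right _ _

/-- If `p` is idempotent and `‖q - p‖ < 1` then `rank p ≤ rank q`. -/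
lemma rank_le_of_close {m : ℕ} {p q : Matrix (Fin m) (Fin m) ℂ}
    (hp : p * p = p) (h : ‖q - p‖ < 1) : p.rank ≤ q.rank := by
  classical
  have key : ∀ x, p.mulVecLin x = x → q.mulVecLin x = 0 → x = 0 := by
    intro x hpx hqx
    by_contra hx0
    set v : EuclideanSpace ℂ (Fin m) := (EuclideanSpace.equiv (Fin m) ℂ).symm x with hv
    have hvne : v ≠ 0 := by
      intro hv0
      apply hx0
      have := congrArg (EuclideanSpace.equiv (Fin m) ℂ) hv0
      simpa [hv] using this
    have hnorm : 0 < ‖v‖ := norm_pos_iff.mpr hvne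
    have hbound := Matrix.l2_opNorm_mulVec (q - p) v
    have hmv : (q - p) *ᵥ v = -x := by
      have h1 : q *ᵥ x = 0 := hqx
      have h2 : p *ᵥ x = x := hpx
      show (q - p) *ᵥ x = -x
      rw [Matrix.sub_mulVec, h1, h2, zero_sub]
    rw [hmv] at hbound
    have hln : ‖(EuclideanSpace.equiv (Fin m) ℂ).symm (-x)‖ = ‖v‖ := by
      have : (EuclideanSpace.equiv (Fin m) ℂ).symm (-x) = -v := by
        apply (EuclideanSpace.equiv (Fin m) ℂ).injective
        simp [hv]
      rw [this, norm_neg]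
    rw [hln] at hbound
    have : ‖v‖ < ‖v‖ := by
      calc ‖v‖ ≤ ‖q - p‖ * ‖v‖ := hbound
        _ < 1 * ‖v‖ := by exact mul_lt_mul_of_pos_right h hnorm
        _ = ‖v‖ := one_mul _
    exact lt_irrefl _ this
  rw [Matrix.rank, Matrix.rank]
  set f : LinearMap.range p.mulVecLin →ₗ[ℂ] LinearMap.range q.mulVecLin :=
    LinearMap.codRestrict (LinearMap.range q.mulVecLin)
      (q.mulVecLin ∘ₗ (LinearMap.range p.mulVecLin).subtype)
      (fun x => ⟨x.1, rfl⟩) with hf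
  have hinj : Function.Injective f := by
    rw [injective_iff_map_eq_zero]
    intro x hx
    have hq0 : q.mulVecLin x.1 = 0 := by
      have := congrArg (Subtype.val) hx
      simpa [hf, LinearMap.codRestrict] using this
    obtain ⟨y, hy⟩ := x.2
    have hpx : p.mulVecLin x.1 = x.1 := by
      rw [← hy]
      show p.mulVecLin (p.mulVecLin y) = p.mulVecLin y
      simp only [Matrix.mulVecLin_apply, Matrix.mulVec_mulVec, hp]
    have := key x.1 hpx hq0
    exact Subtype.ext this
  exact LinearMap.finrank_le_finrank_of_injective hinj

lemma rank_eq_of_close {m : ℕ} {p q : Matrix (Fin m) (Fin m) ℂ}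
    (hp : p * p = p) (hq : q * q = q) (h : ‖q - p‖ < 1) : p.rank = q.rank :=
  le_antisymm (rank_le_of_close hp h)
    (rank_le_of_close hq (by rwa [norm_sub_rev] at h))

/-- Let `p ∈ Q_α` be a projection and `p' = (pₖ)` a lift of `p` with each `pₖ` a
projection in `M_{n_k}`.  (α-invariance of `p` means precisely that
`‖p_{k+1} - pₖ ⊕ 0‖ → 0`.)  Then the rank of `pₖ` is eventually constant: there
exist `r` and `K` with `rank pₖ = r` for all `k ≥ K`. -/
theorem stmt_5 (n : ℕ → ℕ) (hn : StrictMono n)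
    (p : ∀ k, Matrix (Fin (n k)) (Fin (n k)) ℂ)
    (hherm : ∀ k, (p k).IsHermitian) (hidem : ∀ k, p k * p k = p k)
    (hα : Tendsto (fun k => ‖p (k + 1) - cornerEmb n k (p k)‖) atTop (nhds 0)) :
    ∃ r K : ℕ, ∀ k ≥ K, (p k).rank = r := by
  have hev : ∀ᶠ k in atTop, ‖p (k + 1) - cornerEmb n k (p k)‖ < 1 :=
    hα.eventually (gt_mem_nhds one_pos)
  obtain ⟨K, hK⟩ := eventually_atTop.mp hev
  refine ⟨(p K).rank, K, ?_⟩
  intro k hk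
  induction k with
  | zero =>
    have : K = 0 := Nat.le_zero.mp hk
    rw [this]
  | succ k ih =>
    rcases Nat.lt_or_ge K (k + 1) with hlt | hge
    · have hkK : K ≤ k := Nat.lt_succ_iff.mp hlt
      have hmono : n k ≤ n (k + 1) := (hn (Nat.lt_succ_self k)).le
      have hclose : ‖p (k + 1) - cornerEmb n k (p k)‖ < 1 := hK k hkK
      have hcidem : cornerEmb n k (p k) * cornerEmb n k (p k) = cornerEmb n k (p k) := by
        rw [← cornerEmb_mul n k hmono, hidem]
      have h1 : (cornerEmb n k (p k)).rank = (p (k + 1)).rank :=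
        rank_eq_of_close hcidem (hidem (k + 1)) hclose
      rw [← h1, cornerEmb_rank n k hmono, ih hkK]
    · have : K = k + 1 := le_antisymm hk hge
      rw [this]
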